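/- In the two-armed Gaussian sufficient-statistic model, fix λ ∈ ℝ, η > 0, and let θ₁ = (λ + η/n₁, λ − η/n₂) and θ₂ = (λ − η/n₁, λ + η/n₂), with Δ = η(1/n₁ + 1/n₂) and σ² = 1/n₁ + 1/n₂. Then the minimum over all algorithms A of max{ R(A,θ₁), R(A,θ₂) } equals Δ · Φ(−Δ/σ), where Φ is the standard normal CDF, and this minimum is attained by the algorithm A₀ that outputs 1 if X₁ − X₂ ≥ 0 and 2 otherwise, which satisfies R(A₀,θ₁) = R(A₀,θ₂) = Δ · Φ(−Δ/σ). -/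

import Mathlib

open MeasureTheory ProbabilityTheory Real

noncomputable section

/-- The law of the sufficient statistic `X = (X₁, X₂)` with independent
`Xᵢ ~ N(θᵢ, 1/nᵢ)`. -/
def gauss2 (n₁ n₂ : ℝ) (θ : ℝ × ℝ) : Measure (ℝ × ℝ) :=
  (gaussianReal θ.1 (Real.toNNReal (1 / n₁))).prod (gaussianReal θ.2 (Real.toNNReal (1 / n₂)))

/-- The mean of arm `i` in the two-armed instance `θ`. -/
def armMean (θ : ℝ × ℝ) (i : Fin 2) : ℝ := if i = 0 then θ.1 else θ.2

/-- Simple regret of algorithm `A : ℝ² → {1,2}` on the instance `θ` in the two-armed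
Gaussian sufficient-statistic model with counts `(n₁, n₂)`. -/
def reg2 (n₁ n₂ : ℝ) (θ : ℝ × ℝ) (A : ℝ × ℝ → Fin 2) : ℝ :=
  max θ.1 θ.2 - ∫ x, armMean θ (A x) ∂ gauss2 n₁ n₂ θ

/-- Algorithms: measurable maps `ℝ² → {1,2}`. -/
def Alg2 : Type := {A : ℝ × ℝ → Fin 2 // Measurable A}

/-- Instances with means in `[0,1]²`. -/
def Θ2 : Type := {θ : ℝ × ℝ // θ.1 ∈ Set.Icc (0 : ℝ) 1 ∧ θ.2 ∈ Set.Icc (0 : ℝ) 1}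

/-- The minimax simple regret for counts `(n₁, n₂)`. -/
def minimax2 (n₁ n₂ : ℝ) : ℝ := ⨅ A : Alg2, ⨆ θ : Θ2, reg2 n₁ n₂ θ.1 A.1

/-- The `c`-minimax-optimal algorithms `M_{n,c}`. -/
def Mset (n₁ n₂ c : ℝ) : Set Alg2 :=
  {A | (⨆ θ : Θ2, reg2 n₁ n₂ θ.1 A.1) ≤ c * minimax2 n₁ n₂}

/-- The instance-dependent lower bound `R*_{M_{n,c}}(θ)`. -/
def Rstar2 (n₁ n₂ c : ℝ) (θ : ℝ × ℝ) : ℝ := ⨅ A : Mset n₁ n₂ c, reg2 n₁ n₂ θ A.1.1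

/-- The standard normal CDF `Φ`. -/
def stdNormalCDF (t : ℝ) : ℝ := ((gaussianReal 0 1) (Set.Iic t)).toReal



open scoped NNReal ENNReal

lemma pdf_conv_pt (a b : ℝ) (v w : ℝ≥0) (hv : v ≠ 0) (hw : w ≠ 0) (z x : ℝ) :
    gaussianPDFReal a v x * gaussianPDFReal b w (z - x) =
      gaussianPDFReal (a + b) (v + w)  z *
        gaussianPDFReal (a + (v : ℝ) * (z - a - b) / ((v : ℝ) + w)) (v * w / (v + w)) x := by
  have hv' : (0:ℝ) < v := lt_of_le_of_ne (v.coe_nonneg) (by exact_mod_cast (Ne.symm hv))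
  have hw' : (0:ℝ) < w := lt_of_le_of_ne (w.coe_nonneg) (by exact_mod_cast (Ne.symm hw))
  have hvw : (0:ℝ) < (v:ℝ) + w := by linarith
  simp only [gaussianPDFReal, NNReal.coe_add, NNReal.coe_div, NNReal.coe_mul]
  rw [mul_mul_mul_comm, ← Real.exp_add, mul_mul_mul_comm, ← Real.exp_add]
  have hconst : (Real.sqrt (2 * π * v))⁻¹ * (Real.sqrt (2 * π * w))⁻¹ =
      (Real.sqrt (2 * π * ((v:ℝ) + w)))⁻¹ * (Real.sqrt (2 * π * ((v:ℝ) * w / ((v:ℝ) + w))))⁻¹ := by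
    rw [← mul_inv, ← mul_inv, ← Real.sqrt_mul (by positivity), ← Real.sqrt_mul (by positivity)]
    congr 1
    field_simp
  have hexp : -(x - a) ^ 2 / (2 * v) + -(z - x - b) ^ 2 / (2 * w) =
      -(z - (a + b)) ^ 2 / (2 * ((v:ℝ) + w)) +
        -(x - (a + (v:ℝ) * (z - a - b) / ((v:ℝ) + w))) ^ 2 / (2 * ((v:ℝ) * w / ((v:ℝ) + w))) := by
    field_simp
    ring
  rw [hexp, hconst]

lemma pdf_conv (a b : ℝ) (v w : ℝ≥0) (hv : v ≠ 0) (hw : w ≠ 0) (z : ℝ) :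
    ∫ x, gaussianPDFReal a v x * gaussianPDFReal b w (z - x) =
      gaussianPDFReal (a + b) (v + w) z := by
  have hvw : v * w / (v + w) ≠ 0 := by
    have : v + w ≠ 0 := by simp [hv, hw]
    simp [div_eq_zero_iff, hv, hw, this]
  calc ∫ x, gaussianPDFReal a v x * gaussianPDFReal b w (z - x)
      = ∫ x, gaussianPDFReal (a + b) (v + w) z *
          gaussianPDFReal (a + (v : ℝ) * (z - a - b) / ((v : ℝ) + w)) (v * w / (v + w)) x := by
        simp_rw [pdf_conv_pt a b v w hv hw z]
    _ = gaussianPDFReal (a + b) (v + w) z := by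
        rw [MeasureTheory.integral_const_mul, integral_gaussianPDFReal_eq_one _ hvw, mul_one]

lemma gaussianPDFReal_le (b : ℝ) (w : ℝ≥0) (y : ℝ) :
    gaussianPDFReal b w y ≤ (Real.sqrt (2 * π * w))⁻¹ := by
  rw [gaussianPDFReal]
  have h1 : Real.exp (-(y - b)^2 / (2 * (w:ℝ))) ≤ 1 :=
    Real.exp_le_one_iff.2 (div_nonpos_of_nonpos_of_nonneg (neg_nonpos.2 (sq_nonneg _))
      (mul_nonneg zero_le_two w.coe_nonneg))
  calc (Real.sqrt (2 * π * w))⁻¹ * Real.exp (-(y - b)^2 / (2 * (w:ℝ)))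
      ≤ (Real.sqrt (2 * π * w))⁻¹ * 1 :=
        mul_le_mul_of_nonneg_left h1 (inv_nonneg.2 (Real.sqrt_nonneg _))
    _ = _ := mul_one _

lemma conv_integrable (a b : ℝ) (v w : ℝ≥0) (z : ℝ) :
    Integrable (fun x => gaussianPDFReal a v x * gaussianPDFReal b w (z - x)) volume := by
  simp_rw [mul_comm (gaussianPDFReal a v _)]
  refine (integrable_gaussianPDFReal a v).bdd_mul (c := (Real.sqrt (2 * π * w))⁻¹) ?_ ?_
  · exact ((measurable_gaussianPDFReal b w).comp (measurable_const.sub measurable_id)).aestronglyMeasurable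
  · exact ae_of_all _ (fun x => by
      rw [Real.norm_eq_abs, abs_of_nonneg (gaussianPDFReal_nonneg _ _ _)]
      exact gaussianPDFReal_le b w _)

lemma lconv (a b : ℝ) (v w : ℝ≥0) (hv : v ≠ 0) (hw : w ≠ 0) (z : ℝ) :
    ∫⁻ x, gaussianPDF a v x * gaussianPDF b w (z - x) = gaussianPDF (a + b) (v + w) z := by
  have h1 : ∀ x, gaussianPDF a v x * gaussianPDF b w (z - x)
      = ENNReal.ofReal (gaussianPDFReal a v x * gaussianPDFReal b w (z - x)) := fun x => by
    rw [gaussianPDF, gaussianPDF, ← ENNReal.ofReal_mul (gaussianPDFReal_nonneg _ _ _)]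
  simp_rw [h1]
  rw [← ofReal_integral_eq_lintegral_ofReal (conv_integrable a b v w z)
    (ae_of_all _ (fun x => mul_nonneg (gaussianPDFReal_nonneg _ _ _) (gaussianPDFReal_nonneg _ _ _))),
    pdf_conv a b v w hv hw z]
  rfl

lemma gauss_conv (a b : ℝ) (v w : ℝ≥0) (hv : v ≠ 0) (hw : w ≠ 0) :
    Measure.map (fun p : ℝ × ℝ => p.1 + p.2) ((gaussianReal a v).prod (gaussianReal b w)) =
      gaussianReal (a + b) (v + w) := by
  have hvw : v + w ≠ 0 := by simp [hv, hw]
  refine Measure.ext_of_Iic _ _ (fun t => ?_)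
  rw [Measure.map_apply (by fun_prop) measurableSet_Iic]
  have hset : (fun p : ℝ × ℝ => p.1 + p.2) ⁻¹' Set.Iic t = {p : ℝ × ℝ | p.1 + p.2 ≤ t} := rfl
  rw [hset, Measure.prod_apply (by exact measurableSet_le (by fun_prop) measurable_const)]
  have hpre : ∀ x : ℝ, (Prod.mk x ⁻¹' {p : ℝ × ℝ | p.1 + p.2 ≤ t}) = Set.Iic (t - x) := by
    intro x; ext y; simp [Set.mem_Iic]; constructor <;> intro h <;> linarith
  simp_rw [hpre]
  -- express outer measure via density
  have hmono : Measurable (fun x : ℝ => gaussianReal b w (Set.Iic (t - x))) := by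
    have h1 : Measurable (fun y : ℝ => gaussianReal b w (Set.Iic y)) :=
      Monotone.measurable (fun y₁ y₂ h => measure_mono (Set.Iic_subset_Iic.2 h))
    exact h1.comp (measurable_const.sub measurable_id)
  rw [gaussianReal_of_var_ne_zero a hv,
    lintegral_withDensity_eq_lintegral_mul _ (measurable_gaussianPDF a v) hmono]
  simp_rw [Pi.mul_apply, gaussianReal_apply b hw]
  -- inner: translate
  have htrans : ∀ x : ℝ, ∫⁻ y in Set.Iic (t - x), gaussianPDF b w y ∂volume
      = ∫⁻ z in Set.Iic t, gaussianPDF b w (z - x) ∂volume := by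
    intro x
    rw [← lintegral_indicator measurableSet_Iic, ← lintegral_indicator measurableSet_Iic]
    have : ∀ y : ℝ, (Set.Iic (t - x)).indicator (gaussianPDF b w) y
        = (Set.Iic t).indicator (fun z => gaussianPDF b w (z - x)) (y + x) := by
      intro y
      simp only [Set.indicator_apply, Set.mem_Iic]
      by_cases hy : y ≤ t - x
      · rw [if_pos hy, if_pos (by linarith)]
        simp
      · rw [if_neg hy, if_neg (fun h => hy (by linarith))]
    simp_rw [this]
    conv_rhs => rw [← map_add_right_eq_self volume x]
    have hmi : Measurable fun z : ℝ => (Set.Iic t).indicator (fun z => gaussianPDF b w (z - x)) z :=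
      ((measurable_gaussianPDF b w).comp (measurable_id.sub measurable_const)).indicator
        measurableSet_Iic
    exact (lintegral_map hmi (measurable_add_const x)).symm
  simp_rw [htrans]
  -- swap
  have hmeas : Measurable (fun p : ℝ × ℝ => gaussianPDF a v p.1 * ((Set.Iic t).indicator (fun z => gaussianPDF b w (z - p.1)) p.2)) := by
    apply Measurable.mul ((measurable_gaussianPDF a v).comp measurable_fst)
    have : (fun p : ℝ × ℝ => (Set.Iic t).indicator (fun z => gaussianPDF b w (z - p.1)) p.2)
        = fun p : ℝ × ℝ => (Set.Iic t ×ˢ (Set.univ : Set ℝ)).indicator (fun q : ℝ × ℝ => gaussianPDF b w (q.1 - q.2)) (p.2, p.1) := by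
      funext p
      by_cases hp : p.2 ∈ Set.Iic t <;>
        simp [Set.indicator_apply, hp]
    rw [this]
    exact (((measurable_gaussianPDF b w).comp (measurable_fst.sub measurable_snd)).indicator
      (measurableSet_Iic.prod MeasurableSet.univ)).comp (measurable_snd.prodMk measurable_fst)
  calc ∫⁻ x, gaussianPDF a v x * ∫⁻ z in Set.Iic t, gaussianPDF b w (z - x) ∂volume ∂volume
      = ∫⁻ x, ∫⁻ z, gaussianPDF a v x * (Set.Iic t).indicator (fun z => gaussianPDF b w (z - x)) z ∂volume ∂volume := by
        congr 1; funext x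
        symm
        rw [lintegral_const_mul' _ _ (by simp [gaussianPDF]), lintegral_indicator measurableSet_Iic]
    _ = ∫⁻ z, ∫⁻ x, gaussianPDF a v x * (Set.Iic t).indicator (fun z => gaussianPDF b w (z - x)) z ∂volume ∂volume := by
        exact lintegral_lintegral_swap hmeas.aemeasurable
    _ = ∫⁻ z, (Set.Iic t).indicator (fun z => ∫⁻ x, gaussianPDF a v x * gaussianPDF b w (z - x) ∂volume) z ∂volume := by
        congr 1; funext z
        by_cases hz : z ∈ Set.Iic t
        · simp only [Set.indicator_of_mem hz]
        · simp only [Set.indicator_of_notMem hz, mul_zero, lintegral_zero]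
    _ = ∫⁻ z in Set.Iic t, ∫⁻ x, gaussianPDF a v x * gaussianPDF b w (z - x) ∂volume ∂volume := by
        rw [lintegral_indicator measurableSet_Iic]
    _ = ∫⁻ z in Set.Iic t, gaussianPDF (a + b) (v + w) z ∂volume := by
        apply setLIntegral_congr_fun measurableSet_Iic
        exact fun z _ => lconv a b v w hv hw z
    _ = gaussianReal (a + b) (v + w) (Set.Iic t) := (gaussianReal_apply _ hvw _).symm

lemma gauss_neg (b : ℝ) (w : ℝ≥0) :
    Measure.map (fun y : ℝ => -y) (gaussianReal b w) = gaussianReal (-b) w := by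
  have h : (fun y : ℝ => -y) = fun y : ℝ => (-1 : ℝ) * y := by funext y; ring
  rw [h, gaussianReal_map_const_mul (-1 : ℝ)]
  congr 1
  · ring
  · ext
    simp

lemma gauss_diff (a b : ℝ) (v w : ℝ≥0) (hv : v ≠ 0) (hw : w ≠ 0) :
    Measure.map (fun p : ℝ × ℝ => p.1 - p.2) ((gaussianReal a v).prod (gaussianReal b w)) =
      gaussianReal (a - b) (v + w) := by
  have h1 : (fun p : ℝ × ℝ => p.1 - p.2)
      = (fun p : ℝ × ℝ => p.1 + p.2) ∘ (Prod.map (id : ℝ → ℝ) (fun y : ℝ => -y)) := by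
    funext p; simp [sub_eq_add_neg]
  rw [h1, ← Measure.map_map (by fun_prop) (by fun_prop),
    ← Measure.map_prod_map _ _ measurable_id (by fun_prop), Measure.map_id, gauss_neg,
    gauss_conv a (-b) v w hv hw, sub_eq_add_neg]

lemma gauss_scale (m : ℝ) (v : ℝ≥0) (hv : v ≠ 0) :
    Measure.map (fun x : ℝ => Real.sqrt v * x + m) (gaussianReal 0 1) = gaussianReal m v := by
  have h1 : (fun x : ℝ => Real.sqrt v * x + m)
      = (fun x : ℝ => x + m) ∘ (fun x : ℝ => Real.sqrt v * x) := rfl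
  rw [h1, ← Measure.map_map (by fun_prop) (by fun_prop), gaussianReal_map_const_mul,
    gaussianReal_map_add_const]
  congr 1
  · simp
  · ext
    simp [Real.sq_sqrt v.coe_nonneg]

lemma gauss_Iic_cdf (m t : ℝ) (v : ℝ≥0) (hv : v ≠ 0) :
    gaussianReal m v (Set.Iic t) = gaussianReal 0 1 (Set.Iic ((t - m) / Real.sqrt v)) := by
  have hs : (0:ℝ) < Real.sqrt v := Real.sqrt_pos.2 (by exact_mod_cast pos_iff_ne_zero.2 hv)
  rw [← gauss_scale m v hv, Measure.map_apply (by fun_prop) measurableSet_Iic]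
  congr 1
  ext x
  simp only [Set.mem_preimage, Set.mem_Iic]
  rw [le_div_iff₀ hs]
  constructor <;> intro h <;> nlinarith

lemma gauss_singleton (m t : ℝ) (v : ℝ≥0) (hv : v ≠ 0) : gaussianReal m v {t} = 0 :=
  gaussianReal_absolutelyContinuous m hv (measure_singleton t)

lemma gauss_Iio (m t : ℝ) (v : ℝ≥0) (hv : v ≠ 0) :
    gaussianReal m v (Set.Iio t) = gaussianReal m v (Set.Iic t) := by
  have : (Set.Iic t : Set ℝ) = Set.Iio t ∪ {t} := by
    ext x; simp [le_iff_lt_or_eq]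
  rw [this, measure_union (by simp) (measurableSet_singleton t), gauss_singleton m t v hv, add_zero]

lemma gauss_Ici (m t : ℝ) (v : ℝ≥0) :
    gaussianReal m v (Set.Ici t) = gaussianReal (-m) v (Set.Iic (-t)) := by
  rw [← gauss_neg m v, Measure.map_apply (by fun_prop) measurableSet_Iic]
  congr 1
  ext x
  simp

lemma prod_withDensity (f g : ℝ → ℝ≥0∞) (hf : Measurable f) (hg : Measurable g) :
    (volume.withDensity f).prod (volume.withDensity g) =
      ((volume : Measure ℝ).prod volume).withDensity (fun p => f p.1 * g p.2) := by
  ext s hs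
  have hfg : Measurable (fun p : ℝ × ℝ => f p.1 * g p.2) :=
    (hf.comp measurable_fst).mul (hg.comp measurable_snd)
  rw [Measure.prod_apply hs, withDensity_apply _ hs, ← lintegral_indicator hs,
    lintegral_prod _ (hfg.indicator hs).aemeasurable,
    lintegral_withDensity_eq_lintegral_mul _ hf (measurable_measure_prodMk_left hs)]
  congr 1
  funext x
  rw [Pi.mul_apply, withDensity_apply _ (measurable_prodMk_left hs), ← lintegral_indicator
    (measurable_prodMk_left hs),
    ← lintegral_const_mul _ (hg.indicator (measurable_prodMk_left hs))]
  congr 1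
  funext y
  by_cases hxy : (x, y) ∈ s
  · rw [Set.indicator_of_mem hxy, Set.indicator_of_mem (by exact hxy)]
  · rw [Set.indicator_of_notMem hxy, Set.indicator_of_notMem (by exact hxy), mul_zero]

lemma pdf_cmp (n₁ n₂ : ℝ) (hn₁ : 0 < n₁) (hn₂ : 0 < n₂) (lam η x₁ x₂ : ℝ)
    (h : 0 ≤ η * (x₁ - x₂)) :
    gaussianPDFReal (lam - η/n₁) (Real.toNNReal (1/n₁)) x₁ *
      gaussianPDFReal (lam + η/n₂) (Real.toNNReal (1/n₂)) x₂ ≤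
    gaussianPDFReal (lam + η/n₁) (Real.toNNReal (1/n₁)) x₁ *
      gaussianPDFReal (lam - η/n₂) (Real.toNNReal (1/n₂)) x₂ := by
  have hc₁ : ((Real.toNNReal (1/n₁) : ℝ≥0) : ℝ) = 1/n₁ := Real.coe_toNNReal _ (by positivity)
  have hc₂ : ((Real.toNNReal (1/n₂) : ℝ≥0) : ℝ) = 1/n₂ := Real.coe_toNNReal _ (by positivity)
  simp only [gaussianPDFReal, hc₁, hc₂]
  rw [mul_mul_mul_comm, ← Real.exp_add, mul_mul_mul_comm, ← Real.exp_add]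
  apply mul_le_mul_of_nonneg_left _ (by positivity)
  apply Real.exp_le_exp.2
  have key : (-(x₁ - (lam + η/n₁)) ^ 2 / (2 * (1/n₁)) + -(x₂ - (lam - η/n₂)) ^ 2 / (2 * (1/n₂)))
      - (-(x₁ - (lam - η/n₁)) ^ 2 / (2 * (1/n₁)) + -(x₂ - (lam + η/n₂)) ^ 2 / (2 * (1/n₂)))
      = 2 * η * (x₁ - x₂) := by
    field_simp
    ring
  linarith

instance gauss2_prob (n₁ n₂ : ℝ) (θ : ℝ × ℝ) : IsProbabilityMeasure (gauss2 n₁ n₂ θ) := by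
  rw [gauss2]; infer_instance

lemma reg2_eq (n₁ n₂ : ℝ) (θ : ℝ × ℝ) (A : ℝ × ℝ → Fin 2) (hA : Measurable A) :
    reg2 n₁ n₂ θ A = max θ.1 θ.2 - θ.2
      - (θ.1 - θ.2) * ((gauss2 n₁ n₂ θ) (A ⁻¹' {0})).toReal := by
  have hS : MeasurableSet (A ⁻¹' ({0} : Set (Fin 2))) := hA (measurableSet_singleton 0)
  have harm : (fun x => armMean θ (A x))
      = fun x => θ.2 + (A ⁻¹' ({0} : Set (Fin 2))).indicator (fun _ => θ.1 - θ.2) x := by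
    funext x
    by_cases h : A x = 0
    · rw [Set.indicator_of_mem (by exact h)]
      simp [armMean, h]
    · rw [Set.indicator_of_notMem (by exact h)]
      simp [armMean, h]
  rw [reg2, harm, integral_add (integrable_const _)
    ((integrable_const _).indicator hS), integral_const, integral_indicator_const _ hS]
  simp [measure_univ]
  simp only [measureReal_def]
  ring

section np
variable {n₁ n₂ : ℝ} (hn₁ : 0 < n₁) (hn₂ : 0 < n₂) (lam η : ℝ)

lemma v_ne_zero (hn : 0 < n₁) : Real.toNNReal (1/n₁) ≠ 0 := by
  rw [ne_eq, Real.toNNReal_eq_zero, not_le]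
  positivity

lemma gauss2_eq_withDensity (hn₁ : 0 < n₁) (hn₂ : 0 < n₂) (θ : ℝ × ℝ) :
    gauss2 n₁ n₂ θ = ((volume : Measure ℝ).prod volume).withDensity
      (fun p => gaussianPDF θ.1 (Real.toNNReal (1/n₁)) p.1 *
        gaussianPDF θ.2 (Real.toNNReal (1/n₂)) p.2) := by
  rw [gauss2, gaussianReal_of_var_ne_zero _ (v_ne_zero hn₁),
    gaussianReal_of_var_ne_zero _ (v_ne_zero hn₂),
    prod_withDensity _ _ (measurable_gaussianPDF _ _) (measurable_gaussianPDF _ _)]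

/-- the set where arm 1 looks better -/
def Tset : Set (ℝ × ℝ) := {p | p.2 ≤ p.1}

lemma Tset_meas : MeasurableSet Tset :=
  measurableSet_le measurable_snd measurable_fst

lemma np_core (hn₁ : 0 < n₁) (hn₂ : 0 < n₂) (hη : 0 < η) (S : Set (ℝ × ℝ)) (hS : MeasurableSet S) :
    gauss2 n₁ n₂ (lam - η/n₁, lam + η/n₂) Tset
      + gauss2 n₁ n₂ (lam + η/n₁, lam - η/n₂) Tsetᶜ
    ≤ gauss2 n₁ n₂ (lam + η/n₁, lam - η/n₂) Sᶜ
      + gauss2 n₁ n₂ (lam - η/n₁, lam + η/n₂) S := by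
  set v₁ := Real.toNNReal (1/n₁)
  set v₂ := Real.toNNReal (1/n₂)
  set q₁ : ℝ × ℝ → ℝ≥0∞ := fun p => gaussianPDF (lam + η/n₁) v₁ p.1 * gaussianPDF (lam - η/n₂) v₂ p.2
  set q₂ : ℝ × ℝ → ℝ≥0∞ := fun p => gaussianPDF (lam - η/n₁) v₁ p.1 * gaussianPDF (lam + η/n₂) v₂ p.2
  have hq₁ : Measurable q₁ := ((measurable_gaussianPDF _ _).comp measurable_fst).mul
    ((measurable_gaussianPDF _ _).comp measurable_snd)
  have hq₂ : Measurable q₂ := ((measurable_gaussianPDF _ _).comp measurable_fst).mul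
    ((measurable_gaussianPDF _ _).comp measurable_snd)
  have h1 : ∀ (U : Set (ℝ × ℝ)), MeasurableSet U →
      gauss2 n₁ n₂ (lam + η/n₁, lam - η/n₂) U = ∫⁻ p in U, q₁ p ∂((volume : Measure ℝ).prod volume) := by
    intro U hU
    rw [gauss2_eq_withDensity hn₁ hn₂, withDensity_apply _ hU]
  have h2 : ∀ (U : Set (ℝ × ℝ)), MeasurableSet U →
      gauss2 n₁ n₂ (lam - η/n₁, lam + η/n₂) U = ∫⁻ p in U, q₂ p ∂((volume : Measure ℝ).prod volume) := by
    intro U hU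
    rw [gauss2_eq_withDensity hn₁ hn₂, withDensity_apply _ hU]
  rw [h1 _ hS.compl, h2 _ hS, h1 _ Tset_meas.compl, h2 _ Tset_meas]
  -- min density
  set q : ℝ × ℝ → ℝ≥0∞ := fun p => min (q₁ p) (q₂ p) with hq_def
  have hcmp₂ : ∀ p ∈ Tset, q₂ p ≤ q₁ p := by
    intro p hp
    have := pdf_cmp n₁ n₂ hn₁ hn₂ lam η p.1 p.2
      (mul_nonneg hη.le (sub_nonneg.2 hp))
    calc q₂ p = ENNReal.ofReal (gaussianPDFReal (lam - η/n₁) v₁ p.1) *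
          ENNReal.ofReal (gaussianPDFReal (lam + η/n₂) v₂ p.2) := rfl
      _ = ENNReal.ofReal (gaussianPDFReal (lam - η/n₁) v₁ p.1 *
          gaussianPDFReal (lam + η/n₂) v₂ p.2) :=
          (ENNReal.ofReal_mul (gaussianPDFReal_nonneg _ _ _)).symm
      _ ≤ ENNReal.ofReal (gaussianPDFReal (lam + η/n₁) v₁ p.1 *
          gaussianPDFReal (lam - η/n₂) v₂ p.2) := ENNReal.ofReal_le_ofReal this
      _ = ENNReal.ofReal (gaussianPDFReal (lam + η/n₁) v₁ p.1) *
          ENNReal.ofReal (gaussianPDFReal (lam - η/n₂) v₂ p.2) :=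
          ENNReal.ofReal_mul (gaussianPDFReal_nonneg _ _ _)
      _ = q₁ p := rfl
  have hcmp₁ : ∀ p ∈ Tsetᶜ, q₁ p ≤ q₂ p := by
    intro p hp
    have hp' : p.1 ≤ p.2 := le_of_lt (lt_of_not_ge hp)
    have := pdf_cmp n₁ n₂ hn₁ hn₂ lam (-η) p.1 p.2
      (by nlinarith)
    have e1 : lam + -η/n₁ = lam - η/n₁ := by ring
    have e2 : lam - -η/n₂ = lam + η/n₂ := by ring
    have e3 : lam - -η/n₁ = lam + η/n₁ := by ring
    have e4 : lam + -η/n₂ = lam - η/n₂ := by ring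
    rw [e1, e2, e3, e4] at this
    calc q₁ p = ENNReal.ofReal (gaussianPDFReal (lam + η/n₁) v₁ p.1) *
          ENNReal.ofReal (gaussianPDFReal (lam - η/n₂) v₂ p.2) := rfl
      _ = ENNReal.ofReal (gaussianPDFReal (lam + η/n₁) v₁ p.1 *
          gaussianPDFReal (lam - η/n₂) v₂ p.2) :=
          (ENNReal.ofReal_mul (gaussianPDFReal_nonneg _ _ _)).symm
      _ ≤ ENNReal.ofReal (gaussianPDFReal (lam - η/n₁) v₁ p.1 *
          gaussianPDFReal (lam + η/n₂) v₂ p.2) := ENNReal.ofReal_le_ofReal this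
      _ = ENNReal.ofReal (gaussianPDFReal (lam - η/n₁) v₁ p.1) *
          ENNReal.ofReal (gaussianPDFReal (lam + η/n₂) v₂ p.2) :=
          ENNReal.ofReal_mul (gaussianPDFReal_nonneg _ _ _)
      _ = q₂ p := rfl
  calc ∫⁻ p in Tset, q₂ p ∂_ + ∫⁻ p in Tsetᶜ, q₁ p ∂_
      = ∫⁻ p in Tset, q p ∂((volume : Measure ℝ).prod volume)
        + ∫⁻ p in Tsetᶜ, q p ∂((volume : Measure ℝ).prod volume) := by
        congr 1
        · exact setLIntegral_congr_fun Tset_meas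
            (fun p hp => (min_eq_right (hcmp₂ p hp)).symm)
        · exact setLIntegral_congr_fun Tset_meas.compl
            (fun p hp => (min_eq_left (hcmp₁ p hp)).symm)
    _ = ∫⁻ p, q p ∂((volume : Measure ℝ).prod volume) := lintegral_add_compl _ Tset_meas
    _ = ∫⁻ p in Sᶜ, q p ∂((volume : Measure ℝ).prod volume)
        + ∫⁻ p in S, q p ∂((volume : Measure ℝ).prod volume) := by
        rw [add_comm, lintegral_add_compl _ hS]
    _ ≤ ∫⁻ p in Sᶜ, q₁ p ∂((volume : Measure ℝ).prod volume)
        + ∫⁻ p in S, q₂ p ∂((volume : Measure ℝ).prod volume) := by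
        gcongr with p
        · exact min_le_left _ _
        · exact min_le_right _ _
end np

/-- Neyman–Pearson-type optimality of the threshold-0 test: on the competing
instances `θ₁ = (λ + η/n₁, λ − η/n₂)` and `θ₂ = (λ − η/n₁, λ + η/n₂)`, the minimum over all
(measurable) algorithms of `max{R(A,θ₁), R(A,θ₂)}` equals `Δ Φ(−Δ/σ)`, and it is attained by
`A₀` (output arm 1 iff `X₁ − X₂ ≥ 0`), which has regret `Δ Φ(−Δ/σ)` on both instances. -/
theorem neyman_pearson_balanced_optimality (n₁ n₂ : ℝ) (hn₁ : 0 < n₁) (hn₂ : 0 < n₂)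
    (lam η : ℝ) (hη : 0 < η) :
    (⨅ A : Alg2,
        max (reg2 n₁ n₂ (lam + η / n₁, lam - η / n₂) A.1)
          (reg2 n₁ n₂ (lam - η / n₁, lam + η / n₂) A.1)) =
      η * (1 / n₁ + 1 / n₂) *
        stdNormalCDF (-(η * (1 / n₁ + 1 / n₂)) / Real.sqrt (1 / n₁ + 1 / n₂)) ∧
    reg2 n₁ n₂ (lam + η / n₁, lam - η / n₂) (fun x => if 0 ≤ x.1 - x.2 then 0 else 1) =
      η * (1 / n₁ + 1 / n₂) *
        stdNormalCDF (-(η * (1 / n₁ + 1 / n₂)) / Real.sqrt (1 / n₁ + 1 / n₂)) ∧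
    reg2 n₁ n₂ (lam - η / n₁, lam + η / n₂) (fun x => if 0 ≤ x.1 - x.2 then 0 else 1) =
      η * (1 / n₁ + 1 / n₂) *
        stdNormalCDF (-(η * (1 / n₁ + 1 / n₂)) / Real.sqrt (1 / n₁ + 1 / n₂)) := by
  have hv₁ := v_ne_zero hn₁
  have hv₂ := v_ne_zero hn₂
  set Δ : ℝ := η * (1 / n₁ + 1 / n₂) with hΔdef
  have hΔ : 0 < Δ := by positivity
  set c : ℝ := -Δ / Real.sqrt (1 / n₁ + 1 / n₂) with hcdef
  set N0 : ℝ≥0∞ := gaussianReal 0 1 (Set.Iic c) with hN0def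
  have hstd : stdNormalCDF c = N0.toReal := rfl
  set V : ℝ≥0 := Real.toNNReal (1 / n₁) + Real.toNNReal (1 / n₂) with hVdef
  have hV : V ≠ 0 := by
    intro h
    exact hv₁ (by simpa using (add_eq_zero.1 h).1)
  have hVc : (V : ℝ) = 1 / n₁ + 1 / n₂ := by
    rw [hVdef, NNReal.coe_add, Real.coe_toNNReal _ (by positivity),
      Real.coe_toNNReal _ (by positivity)]
  -- the two instances
  set θ₁ : ℝ × ℝ := (lam + η / n₁, lam - η / n₂) with hθ₁def
  set θ₂ : ℝ × ℝ := (lam - η / n₁, lam + η / n₂) with hθ₂def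
  -- laws of the difference statistic
  have hmap₁ : Measure.map (fun p : ℝ × ℝ => p.1 - p.2) (gauss2 n₁ n₂ θ₁)
      = gaussianReal Δ V := by
    rw [gauss2, gauss_diff _ _ _ _ hv₁ hv₂]
    congr 1
    show (lam + η / n₁) - (lam - η / n₂) = Δ
    rw [hΔdef]; ring
  have hmap₂ : Measure.map (fun p : ℝ × ℝ => p.1 - p.2) (gauss2 n₁ n₂ θ₂)
      = gaussianReal (-Δ) V := by
    rw [gauss2, gauss_diff _ _ _ _ hv₁ hv₂]
    congr 1
    show (lam - η / n₁) - (lam + η / n₂) = -Δ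
    rw [hΔdef]; ring
  have hIic : gaussianReal Δ V (Set.Iic 0) = N0 := by
    rw [gauss_Iic_cdf Δ 0 V hV, hN0def]
    congr 2
    rw [hVc, hcdef]
    ring
  have hTc : (Tsetᶜ : Set (ℝ × ℝ)) = (fun p : ℝ × ℝ => p.1 - p.2) ⁻¹' Set.Iio 0 := by
    ext p
    simp [Tset, not_le, sub_neg]
  have hT : (Tset : Set (ℝ × ℝ)) = (fun p : ℝ × ℝ => p.1 - p.2) ⁻¹' Set.Ici 0 := by
    ext p
    simp [Tset, sub_nonneg]
  have hmeas_diff : Measurable (fun p : ℝ × ℝ => p.1 - p.2) :=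
    measurable_fst.sub measurable_snd
  have hP₁Tc : gauss2 n₁ n₂ θ₁ Tsetᶜ = N0 := by
    rw [hTc, ← Measure.map_apply hmeas_diff measurableSet_Iio, hmap₁,
      gauss_Iio _ _ _ hV, hIic]
  have hP₂T : gauss2 n₁ n₂ θ₂ Tset = N0 := by
    rw [hT, ← Measure.map_apply hmeas_diff measurableSet_Ici, hmap₂,
      gauss_Ici, neg_neg, neg_zero, hIic]
  -- regret formulas
  have hη₁ : 0 < η / n₁ := by positivity
  have hη₂ : 0 < η / n₂ := by positivity
  have hreg₁ : ∀ A : ℝ × ℝ → Fin 2, Measurable A →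
      reg2 n₁ n₂ θ₁ A = Δ * (gauss2 n₁ n₂ θ₁ (A ⁻¹' {0})ᶜ).toReal := by
    intro A hA
    have hS : MeasurableSet (A ⁻¹' ({0} : Set (Fin 2))) := hA (measurableSet_singleton 0)
    rw [reg2_eq n₁ n₂ θ₁ A hA]
    have hcompl : (gauss2 n₁ n₂ θ₁ (A ⁻¹' {0})ᶜ).toReal
        = 1 - (gauss2 n₁ n₂ θ₁ (A ⁻¹' {0})).toReal := by
      rw [prob_compl_eq_one_sub hS, ENNReal.toReal_sub_of_le prob_le_one ENNReal.one_ne_top,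
        ENNReal.toReal_one]
    rw [hcompl]
    have h1 : θ₁.1 = lam + η / n₁ := rfl
    have h2 : θ₁.2 = lam - η / n₂ := rfl
    rw [h1, h2, max_eq_left (by linarith)]
    rw [hΔdef]; ring
  have hreg₂ : ∀ A : ℝ × ℝ → Fin 2, Measurable A →
      reg2 n₁ n₂ θ₂ A = Δ * (gauss2 n₁ n₂ θ₂ (A ⁻¹' {0})).toReal := by
    intro A hA
    rw [reg2_eq n₁ n₂ θ₂ A hA]
    have h1 : θ₂.1 = lam - η / n₁ := rfl
    have h2 : θ₂.2 = lam + η / n₂ := rfl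
    rw [h1, h2, max_eq_right (by linarith)]
    rw [hΔdef]; ring
  -- the threshold algorithm
  set A₀ : ℝ × ℝ → Fin 2 := fun x => if 0 ≤ x.1 - x.2 then 0 else 1 with hA₀def
  have hA₀meas : Measurable A₀ :=
    Measurable.ite (measurableSet_le measurable_const hmeas_diff)
      measurable_const measurable_const
  have hA₀pre : A₀ ⁻¹' ({0} : Set (Fin 2)) = Tset := by
    ext x
    by_cases h : 0 ≤ x.1 - x.2 <;>
      simp [A₀, h, Tset, sub_nonneg, ← sub_nonneg (b := x.2)]
  have hA₀reg₁ : reg2 n₁ n₂ θ₁ A₀ = Δ * stdNormalCDF c := by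
    rw [hreg₁ A₀ hA₀meas, hA₀pre, hP₁Tc, hstd]
  have hA₀reg₂ : reg2 n₁ n₂ θ₂ A₀ = Δ * stdNormalCDF c := by
    rw [hreg₂ A₀ hA₀meas, hA₀pre, hP₂T, hstd]
  -- lower bound
  have hlb : ∀ A : Alg2, Δ * stdNormalCDF c ≤ max (reg2 n₁ n₂ θ₁ A.1) (reg2 n₁ n₂ θ₂ A.1) := by
    rintro ⟨A, hA⟩
    have hS : MeasurableSet (A ⁻¹' ({0} : Set (Fin 2))) := hA (measurableSet_singleton 0)
    have key := np_core lam η hn₁ hn₂ hη (A ⁻¹' {0}) hS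
    rw [hP₂T, hP₁Tc] at key
    have hfin : gauss2 n₁ n₂ θ₁ (A ⁻¹' {0})ᶜ + gauss2 n₁ n₂ θ₂ (A ⁻¹' {0}) ≠ ⊤ :=
      ENNReal.add_ne_top.2 ⟨measure_ne_top _ _, measure_ne_top _ _⟩
    have key' : N0.toReal + N0.toReal ≤
        (gauss2 n₁ n₂ θ₁ (A ⁻¹' {0})ᶜ).toReal + (gauss2 n₁ n₂ θ₂ (A ⁻¹' {0})).toReal := by
      have := ENNReal.toReal_mono hfin key
      rwa [ENNReal.toReal_add (measure_ne_top _ _) (measure_ne_top _ _),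
        ENNReal.toReal_add (measure_ne_top _ _) (measure_ne_top _ _)] at this
    rw [hreg₁ A hA, hreg₂ A hA, hstd]
    set a := (gauss2 n₁ n₂ θ₁ (A ⁻¹' {0})ᶜ).toReal
    set b := (gauss2 n₁ n₂ θ₂ (A ⁻¹' {0})).toReal
    have hmax : N0.toReal ≤ max a b := by
      rcases le_total a b with h | h
      · rw [max_eq_right h]; linarith
      · rw [max_eq_left h]; linarith
    rcases le_total a b with h | h
    · rw [max_eq_right (mul_le_mul_of_nonneg_left h hΔ.le), max_eq_right h] at *
      exact mul_le_mul_of_nonneg_left hmax hΔ.le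
    · rw [max_eq_left (mul_le_mul_of_nonneg_left h hΔ.le), max_eq_left h] at *
      exact mul_le_mul_of_nonneg_left hmax hΔ.le
  haveI : Nonempty Alg2 := ⟨⟨fun _ => 0, measurable_const⟩⟩
  refine ⟨?_, hA₀reg₁, hA₀reg₂⟩
  apply le_antisymm
  · have h1 : (⨅ A : Alg2, max (reg2 n₁ n₂ θ₁ A.1) (reg2 n₁ n₂ θ₂ A.1))
        ≤ max (reg2 n₁ n₂ θ₁ A₀) (reg2 n₁ n₂ θ₂ A₀) :=
      ciInf_le ⟨Δ * stdNormalCDF c, by rintro y ⟨A, rfl⟩; exact hlb A⟩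
        (⟨A₀, hA₀meas⟩ : Alg2)
    rw [hA₀reg₁, hA₀reg₂, max_self] at h1
    exact h1
  · exact le_ciInf hlb

end
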